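/- Let A be a commutative ring and let t, h₀, h₁, h₂ ∈ A. Let B := A[a, b] be the polynomial ring in two variables over A, and let B_a be its localization away from a. Then there is an A-algebra isomorphism B_a/(a·b + t, h₀ + a·h₁ + b·h₂) ≅ (A[a]_a)/(a·h₀ + a²·h₁ − t·h₂) which fixes A and sends a to a (and b to −t/a). -/

import Mathlib

open MvPolynomial

set_option maxHeartbeats 1000000
set_option synthInstance.maxHeartbeats 400000

/-- Let `A` be a commutative ring and let `t, h₀, h₁, h₂ ∈ A`.  Let
`B := A[a, b]` be the polynomial ring in two variables over `A` and let `B_a` be its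
localization away from `a`.  Then there is an `A`-algebra isomorphism
`B_a/(a·b + t, h₀ + a·h₁ + b·h₂) ≅ (A[a]_a)/(a·h₀ + a²·h₁ − t·h₂)` which fixes `A` and sends
`a` to `a` (and `b` to `−t/a`).  Here `a = X 0` and `b = X 1` in
`B = MvPolynomial (Fin 2) A`, and `A[a]` is `Polynomial A` with `a = Polynomial.X`. -/
theorem stmt_13 (A : Type*) [CommRing A] (t h0 h1 h2 : A) :
    let B := MvPolynomial (Fin 2) A
    let a : B := X 0
    let b : B := X 1
    let Ba := Localization.Away a
    let ι : B →+* Ba := algebraMap B Ba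
    let I : Ideal Ba := Ideal.span {ι (a * b + C t), ι (C h0 + a * C h1 + b * C h2)}
    let Aa := Localization.Away (Polynomial.X : Polynomial A)
    let ι' : Polynomial A →+* Aa := algebraMap (Polynomial A) Aa
    let J : Ideal Aa := Ideal.span
      {ι' (Polynomial.X * Polynomial.C h0 + Polynomial.X ^ 2 * Polynomial.C h1
            - Polynomial.C t * Polynomial.C h2)}
    ∃ e : (Ba ⧸ I) ≃ₐ[A] (Aa ⧸ J),
      e (Ideal.Quotient.mk I (ι a)) = Ideal.Quotient.mk J (ι' Polynomial.X) ∧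
      e (Ideal.Quotient.mk I (ι b)) =
        Ideal.Quotient.mk J
          (- algebraMap A Aa t * IsLocalization.Away.invSelf (Polynomial.X : Polynomial A)) := by
  intro B a b Ba ι I Aa ι' J
  classical
  set mkI := Ideal.Quotient.mk I with hmkI
  set mkJ := Ideal.Quotient.mk J with hmkJ
  have halgAa : ∀ r : A, algebraMap A Aa r = ι' (Polynomial.C r) := fun r => by
    rw [IsScalarTower.algebraMap_apply A (Polynomial A) Aa]; rfl
  have halgBa : ∀ r : A, algebraMap A Ba r = ι (C r) := fun r => by
    rw [IsScalarTower.algebraMap_apply A B Ba]; rfl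
  have hXinv : ι' Polynomial.X * IsLocalization.Away.invSelf (Polynomial.X : Polynomial A) = 1 :=
    IsLocalization.Away.mul_invSelf _
  have hainv : ι a * IsLocalization.Away.invSelf a = 1 := IsLocalization.Away.mul_invSelf _
  -- atoms
  set u : Aa ⧸ J := mkJ (IsLocalization.Away.invSelf (Polynomial.X : Polynomial A)) with hu
  have hxu : mkJ (ι' Polynomial.X) * u = 1 := by rw [hu, ← map_mul, hXinv, map_one]
  -- relations in the quotients
  have hg1' : mkI (ι a) * mkI (ι b) + mkI (ι (C t)) = 0 := by
    have h : mkI (ι (a * b + C t)) = 0 := by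
      rw [hmkI, Ideal.Quotient.eq_zero_iff_mem]
      exact Ideal.subset_span (Or.inl rfl)
    simp only [map_add, map_mul] at h
    exact h
  have hg2' : mkI (ι (C h0)) + mkI (ι a) * mkI (ι (C h1)) + mkI (ι b) * mkI (ι (C h2)) = 0 := by
    have h : mkI (ι (C h0 + a * C h1 + b * C h2)) = 0 := by
      rw [hmkI, Ideal.Quotient.eq_zero_iff_mem]
      exact Ideal.subset_span (Or.inr rfl)
    simp only [map_add, map_mul] at h
    exact h
  have hJ' : mkJ (ι' Polynomial.X) * mkJ (ι' (Polynomial.C h0))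
      + mkJ (ι' Polynomial.X) ^ 2 * mkJ (ι' (Polynomial.C h1))
      - mkJ (ι' (Polynomial.C t)) * mkJ (ι' (Polynomial.C h2)) = 0 := by
    have h : mkJ (ι' (Polynomial.X * Polynomial.C h0 + Polynomial.X ^ 2 * Polynomial.C h1
        - Polynomial.C t * Polynomial.C h2)) = 0 := by
      rw [hmkJ, Ideal.Quotient.eq_zero_iff_mem]
      exact Ideal.subset_span rfl
    simp only [map_sub, map_add, map_mul, map_pow] at h
    exact h
  -- the forward map on B
  set v0 : Aa ⧸ J := mkJ (ι' Polynomial.X) with hv0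
  set v1 : Aa ⧸ J :=
    mkJ (- algebraMap A Aa t * IsLocalization.Away.invSelf (Polynomial.X : Polynomial A)) with hv1
  have hv1' : v1 = - mkJ (ι' (Polynomial.C t)) * u := by
    rw [hv1, halgAa t, map_mul, map_neg, hu]
  set φ : B →+* (Aa ⧸ J) := eval₂Hom (mkJ.comp ((algebraMap A Aa))) ![v0, v1] with hφ
  have hφa : φ a = v0 := by rw [hφ]; erw [eval₂Hom_X']; simp
  have hφb : φ b = v1 := by rw [hφ]; erw [eval₂Hom_X']; simp
  have hφC : ∀ r : A, φ (C r) = mkJ (algebraMap A Aa r) := fun r => by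
    rw [hφ]; erw [eval₂Hom_C]; rfl
  have huJ : IsUnit (φ a) := by
    rw [hφa, hv0]
    exact isUnit_iff_exists_inv.mpr ⟨u, hxu⟩
  set f0 : Ba →+* Aa ⧸ J := IsLocalization.Away.lift a huJ with hf0
  have hf0eq : ∀ p : B, f0 (ι p) = φ p := fun p => IsLocalization.Away.lift_eq a huJ p
  have hgen1 : f0 (ι (a * b + C t)) = 0 := by
    rw [hf0eq, map_add, map_mul, hφa, hφb, hφC, hv1', halgAa t, hv0]
    linear_combination (- mkJ (ι' (Polynomial.C t))) * hxu
  have hgen2 : f0 (ι (C h0 + a * C h1 + b * C h2)) = 0 := by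
    rw [hf0eq, map_add, map_add, map_mul, map_mul, hφa, hφb, hφC, hφC, hφC,
      hv1', halgAa h0, halgAa h1, halgAa h2, hv0]
    linear_combination u * hJ' - (mkJ (ι' (Polynomial.C h0))
      + mkJ (ι' Polynomial.X) * mkJ (ι' (Polynomial.C h1))) * hxu
  have hker : I ≤ RingHom.ker f0 := by
    rw [Ideal.span_le]
    rintro x (rfl | rfl)
    · exact hgen1
    · exact hgen2
  set f : Ba ⧸ I →+* Aa ⧸ J := Ideal.Quotient.lift I f0 (fun x hx => hker hx) with hf
  have hfmk : ∀ x : Ba, f (mkI x) = f0 x := fun x => rfl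
  -- backward map
  set w0 : Ba ⧸ I := mkI (ι a) with hw0
  set σ : Polynomial A →+* (Ba ⧸ I) :=
    Polynomial.eval₂RingHom (mkI.comp (algebraMap A Ba)) w0 with hσ
  have hσX : σ Polynomial.X = w0 := by simp [hσ]
  have hσC : ∀ r : A, σ (Polynomial.C r) = mkI (algebraMap A Ba r) := fun r => by simp [hσ]
  have huI : IsUnit (σ Polynomial.X) := by
    rw [hσX, hw0]
    exact isUnit_iff_exists_inv.mpr ⟨mkI (IsLocalization.Away.invSelf a), by
      rw [← map_mul, hainv, map_one]⟩
  set g0 : Aa →+* Ba ⧸ I := IsLocalization.Away.lift Polynomial.X huI with hg0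
  have hg0eq : ∀ p : Polynomial A, g0 (ι' p) = σ p := fun p =>
    IsLocalization.Away.lift_eq Polynomial.X huI p
  have hJgen : g0 (ι' (Polynomial.X * Polynomial.C h0 + Polynomial.X ^ 2 * Polynomial.C h1
      - Polynomial.C t * Polynomial.C h2)) = 0 := by
    rw [hg0eq]
    simp only [map_sub, map_add, map_mul, map_pow, hσX, hσC]
    rw [halgBa h0, halgBa h1, halgBa t, halgBa h2, hw0]
    linear_combination (mkI (ι a)) * hg2' - (mkI (ι (C h2))) * hg1'
  have hkerJ : J ≤ RingHom.ker g0 := by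
    rw [Ideal.span_le]
    rintro x rfl
    exact hJgen
  set g : Aa ⧸ J →+* Ba ⧸ I := Ideal.Quotient.lift J g0 (fun x hx => hkerJ hx) with hg
  have hgmk : ∀ x : Aa, g (mkJ x) = g0 x := fun x => rfl
  -- key computations
  have hgv0 : g v0 = w0 := by rw [hv0, hgmk, hg0eq, hσX]
  have hgC : ∀ r : A, g (mkJ (algebraMap A Aa r)) = mkI (algebraMap A Ba r) := fun r => by
    rw [halgAa, hgmk, hg0eq, hσC, halgBa]
  set gu : Ba ⧸ I := g0 (IsLocalization.Away.invSelf (Polynomial.X : Polynomial A)) with hgu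
  have hwinv : mkI (ι a) * gu = 1 := by
    have h : mkI (ι a) = g0 (ι' Polynomial.X) := by rw [hg0eq, hσX, hw0]
    rw [h, hgu, ← map_mul, hXinv, map_one]
  have hgv1 : g v1 = mkI (ι b) := by
    have hgut : g u = gu := by rw [hu, hgmk, hgu]
    have hgt : g (mkJ (ι' (Polynomial.C t))) = mkI (ι (C t)) := by
      rw [hgmk, hg0eq, hσC, halgBa]
    rw [hv1', map_mul, map_neg, hgt, hgut]
    linear_combination (- gu) * hg1' + (mkI (ι b)) * hwinv
  have hfw0 : f w0 = v0 := by rw [hw0, hfmk, hf0eq, hφa]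
  have hfb : f (mkI (ι b)) = v1 := by rw [hfmk, hf0eq, hφb]
  have hfC : ∀ r : A, f (mkI (algebraMap A Ba r)) = mkJ (algebraMap A Aa r) := fun r => by
    rw [halgBa, hfmk, hf0eq, hφC]
  -- compositions
  have hgf : g.comp f = RingHom.id _ := by
    apply Ideal.Quotient.ringHom_ext
    apply IsLocalization.ringHom_ext (Submonoid.powers a)
    apply MvPolynomial.ringHom_ext
    · intro r
      simp only [RingHom.comp_apply, RingHom.id_apply]
      show g (f (mkI (ι (C r)))) = mkI (ι (C r))
      rw [← halgBa r, hfC, hgC]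
    · intro i
      fin_cases i
      · simp only [RingHom.comp_apply, RingHom.id_apply]
        show g (f (mkI (ι a))) = mkI (ι a)
        rw [← hw0, hfw0, hgv0]
      · simp only [RingHom.comp_apply, RingHom.id_apply]
        show g (f (mkI (ι b))) = mkI (ι b)
        rw [hfb, hgv1]
  have hfg : f.comp g = RingHom.id _ := by
    apply Ideal.Quotient.ringHom_ext
    apply IsLocalization.ringHom_ext (Submonoid.powers (Polynomial.X : Polynomial A))
    apply Polynomial.ringHom_ext
    · intro r
      simp only [RingHom.comp_apply, RingHom.id_apply]
      rw [show (Ideal.Quotient.mk J) (ι' (Polynomial.C r)) = mkJ (algebraMap A Aa r) from by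
        rw [hmkJ, halgAa r]]
      rw [hgC, hfC]
    · simp only [RingHom.comp_apply, RingHom.id_apply]
      rw [show (Ideal.Quotient.mk J) (ι' Polynomial.X) = v0 from rfl, hgv0, hfw0]
  -- build the equivalence
  set e0 : (Ba ⧸ I) ≃+* (Aa ⧸ J) := RingEquiv.ofRingHom f g
    hfg hgf with he0
  have hcomm : ∀ r : A, e0 (algebraMap A (Ba ⧸ I) r) = algebraMap A (Aa ⧸ J) r := by
    intro r
    have h1 : algebraMap A (Ba ⧸ I) r = mkI (algebraMap A Ba r) := by
      rw [IsScalarTower.algebraMap_apply A Ba (Ba ⧸ I)]; rfl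
    have h2 : algebraMap A (Aa ⧸ J) r = mkJ (algebraMap A Aa r) := by
      rw [IsScalarTower.algebraMap_apply A Aa (Aa ⧸ J)]; rfl
    rw [h1, h2]
    exact hfC r
  exact ⟨AlgEquiv.ofRingEquiv hcomm, hfw0, hfb⟩
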